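/- Let (E_k)_{k≥1} be a sequence of reals satisfying E_{k+1} ≤ (1 - 9/(k+8)) E_k + C/(k+8)^{4/3} for all k ≥ 1, where C ≥ 0 and E_1 is arbitrary. Then for all k ≥ 1: E_{k+1} ≤ 9^{1/3} C / (k+8)^{1/3}. -/

import Mathlib

private lemma cube_root_cube {x : ℝ} (hx : 0 < x) : (x ^ ((1:ℝ)/3)) ^ 3 = x := by
  rw [← Real.rpow_natCast (x ^ ((1:ℝ)/3)) 3, ← Real.rpow_mul hx.le]
  norm_num

private lemma key_ineq (a b A : ℝ) (ha : 0 < a) (hb : 0 < b) (hA : 0 < A)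
    (hab : a ≤ b) (h1 : 3*a^2*(b-a) ≤ 1) (hb3 : 9*b^3 ≤ 10*a^3)
    (hA1 : 1 ≤ A) : A*b^4 - 9*A*b + a ≤ A*a*b^3 := by
  nlinarith [mul_nonneg (mul_nonneg (sub_nonneg.2 hb3) (sub_nonneg.2 hab)) hA.le,
    mul_nonneg (sub_nonneg.2 h1) (mul_nonneg hA.le ha.le),
    mul_nonneg (sub_nonneg.2 hA1) ha.le,
    mul_nonneg hA.le (sub_nonneg.2 hab),
    mul_nonneg hA.le ha.le]

/-- Induction lemma resolving the SHCGM recursion for the smoothed gap. -/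
theorem shcgm_gap_recursion (E : ℕ → ℝ) (C : ℝ) (hC : 0 ≤ C)
    (hrec : ∀ k : ℕ, 1 ≤ k →
      E (k + 1) ≤ (1 - 9 / ((k : ℝ) + 8)) * E k + C / ((k : ℝ) + 8) ^ ((4 : ℝ) / 3)) :
    ∀ k : ℕ, 1 ≤ k →
      E (k + 1) ≤ (9 : ℝ) ^ ((1 : ℝ) / 3) * C / ((k : ℝ) + 8) ^ ((1 : ℝ) / 3) := by
  intro k hk
  induction k, hk using Nat.le_induction with
  | base =>
    have h := hrec 1 le_rfl
    norm_num at h ⊢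
    have h1 : (1:ℝ) ≤ (9:ℝ) ^ ((4:ℝ)/3) := by
      have := Real.rpow_le_rpow_of_exponent_le (show (1:ℝ) ≤ 9 by norm_num)
        (show (0:ℝ) ≤ (4:ℝ)/3 by norm_num)
      rwa [Real.rpow_zero] at this
    have h2 : C / (9:ℝ) ^ ((4:ℝ)/3) ≤ C := div_le_self hC h1
    linarith
  | succ k hk ih =>
    have hk1 : (1:ℝ) ≤ (k:ℝ) := by exact_mod_cast hk
    set t : ℝ := (k : ℝ) + 8 with htdef
    have ht : (9:ℝ) ≤ t := by rw [htdef]; linarith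
    have ht0 : (0:ℝ) < t := by linarith
    have hs0 : (0:ℝ) < t + 1 := by linarith
    set a : ℝ := t ^ ((1:ℝ)/3) with hadef
    set b : ℝ := (t+1) ^ ((1:ℝ)/3) with hbdef
    set A : ℝ := (9:ℝ) ^ ((1:ℝ)/3) with hAdef
    have ha0 : 0 < a := Real.rpow_pos_of_pos ht0 _
    have hb0 : 0 < b := Real.rpow_pos_of_pos hs0 _
    have hA0 : 0 < A := Real.rpow_pos_of_pos (by norm_num) _
    have ha3 : a^3 = t := cube_root_cube ht0
    have hb3 : b^3 = t+1 := cube_root_cube hs0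
    have hA3 : A^3 = 9 := cube_root_cube (by norm_num)
    have hab : a ≤ b := Real.rpow_le_rpow ht0.le (by linarith) (by norm_num)
    have hA1 : 1 ≤ A := by nlinarith [sq_nonneg (A-1), sq_nonneg (A+1)]
    have h1 : 3*a^2*(b-a) ≤ 1 := by
      nlinarith [mul_nonneg (mul_nonneg (sub_nonneg.2 hab) (sub_nonneg.2 hab))
        (by positivity : (0:ℝ) ≤ b + 2*a)]
    have hb3le : 9*b^3 ≤ 10*a^3 := by rw [ha3, hb3]; linarith
    have num := key_ineq a b A ha0 hb0 hA0 hab h1 hb3le hA1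
    have u : (1 - 9/b^3)*(A/a) + 1/b^4 ≤ A/b := by
      rw [show (1 - 9/b^3)*(A/a) + 1/b^4 = (A*b^4 - 9*A*b + a)/(a*b^4) by
            field_simp,
          show A/b = (A*a*b^3)/(a*b^4) by
            field_simp]
      exact (div_le_div_iff_of_pos_right (by positivity)).2 num
    have hs43 : (t+1)^((4:ℝ)/3) = b^4 := by
      rw [show ((4:ℝ)/3) = (1/3)*((4:ℕ):ℝ) by norm_num, Real.rpow_mul hs0.le,
        Real.rpow_natCast]
    have hrec' := hrec (k+1) (by omega)
    have hcast : ((k+1:ℕ):ℝ) + 8 = t + 1 := by push_cast; rw [htdef]; ring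
    rw [hcast] at hrec'
    have hcoeff : (0:ℝ) ≤ 1 - 9/(t+1) := by
      have : 9/(t+1) ≤ 1 := by
        rw [div_le_one hs0]; linarith
      linarith
    have step1 : E (k+1+1) ≤ (1 - 9/(t+1)) * (A*C/a) + C/(t+1)^((4:ℝ)/3) := by
      have hE : E (k+1) ≤ A*C/a := ih
      nlinarith [mul_le_mul_of_nonneg_left hE hcoeff]
    have step2 : (1 - 9/(t+1)) * (A*C/a) + C/(t+1)^((4:ℝ)/3) ≤ A*C/b := by
      rw [hs43, ← hb3]
      calc (1 - 9/b^3)*(A*C/a) + C/b^4 = C * ((1 - 9/b^3)*(A/a) + 1/b^4) := by ring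
        _ ≤ C * (A/b) := mul_le_mul_of_nonneg_left u hC
        _ = A*C/b := by ring
    calc E (k+1+1) ≤ A*C/b := step1.trans step2
      _ = A * C / (((k+1:ℕ):ℝ) + 8) ^ ((1:ℝ)/3) := by rw [hcast]
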